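/- Let (X,x) be a normal isolated singularity of complex dimension n with link N. Suppose there exist i₁,...,i_k ∈ {1,...,2n−2−h} with i₁+⋯+i_k ≥ h+1 such that the cup product map H^{i₁}(N;R) ⊗ ⋯ ⊗ H^{i_k}(N;R) → H^{i₁+⋯+i_k}(N;R) does not vanish identically (for some coefficient ring R). Then the exceptional set of any resolution of (X,x) has complex dimension at least (h+1)/2. -/
import Mathlib


/-- Proposition 4.1, `dimex`.
Let `(X,x)` be a normal isolated singularity of complex dimension `n` with link `N`.
Following the context, a resolution of `(X,x)` is encoded by its total space `W` over a
Milnor representative: a compact oriented `2n`-manifold with boundary `N` which deformation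
retracts onto the exceptional set `E` of complex dimension `d`, hence has the homotopy type
of a CW-complex of dimension `2d`.  As in Theorem 3.1, this is encoded via the graded
cohomology `R`-algebras of `W` and `N`, the degree-preserving restriction `b`, relative
cohomology `Hrel j = H^j(W,N;R)` with exactness of `H^j(W) → H^j(N) → H^{j+1}(W,N)`,
Poincaré–Lefschetz duality `H^{j+1}(W,N;R) ≃ H_{2n-j-1}(W;R)`, and vanishing of the
(co)homology of `W` above degree `2d`.  Suppose there exist `i₁,…,i_k ∈ {1,…,2n-2-h}`
with `i₁+⋯+i_k ≥ h+1` such that the cup product map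
`H^{i₁}(N;R) ⊗ ⋯ ⊗ H^{i_k}(N;R) → H^{i₁+⋯+i_k}(N;R)` does not vanish identically.
Then `2d ≥ h+1`, i.e. the exceptional set has complex dimension at least `(h+1)/2`. -/
theorem statement15
    (R : Type) [CommRing R] (n h d : ℕ) (hn : 1 ≤ n)
    (HW HN : Type) [Ring HW] [Ring HN] [Algebra R HW] [Algebra R HN]
    (𝒲 : ℕ → Submodule R HW) (𝒩 : ℕ → Submodule R HN)
    [GradedAlgebra 𝒲] [GradedAlgebra 𝒩]
    (b : HW →ₐ[R] HN)
    (hb : ∀ j, ∀ x ∈ 𝒲 j, b x ∈ 𝒩 j)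
    (Hrel : ℕ → Type) [∀ j, AddCommGroup (Hrel j)] [∀ j, Module R (Hrel j)]
    (Hlow : ℕ → Type) [∀ j, AddCommGroup (Hlow j)] [∀ j, Module R (Hlow j)]
    (δ : ∀ j, (𝒩 j) →ₗ[R] Hrel (j + 1))
    (hexact : ∀ j (y : 𝒩 j), δ j y = 0 → ∃ x ∈ 𝒲 j, b x = (y : HN))
    (duality : ∀ j, Hrel (j + 1) ≃ₗ[R] Hlow (2 * n - j - 1))
    -- W retracts onto the exceptional set E of complex dimension d:
    -- W is homotopically of dimension ≤ 2d
    (hHlow : ∀ j, 2 * d + 1 ≤ j → Subsingleton (Hlow j))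
    (hcohW : ∀ j, 2 * d + 1 ≤ j → 𝒲 j = ⊥)
    -- a non-vanishing cup product on the link N
    (k : ℕ) (i : Fin k → ℕ)
    (hil : ∀ l, 1 ≤ i l) (hiu : ∀ l, i l ≤ 2 * n - 2 - h)
    (hsum : h + 1 ≤ ∑ l, i l)
    (x : Fin k → HN) (hx : ∀ l, x l ∈ 𝒩 (i l))
    (hprod : (List.ofFn x).prod ≠ 0) :
    h + 1 ≤ 2 * d := by
  by_contra hcon
  push_neg at hcon
  have hd : 2 * d ≤ h := by omega
  have key : ∀ l : Fin k, ∃ w ∈ 𝒲 (i l), b w = x l := by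
    intro l
    have h1 := hil l
    have h2 := hiu l
    have hsub : Subsingleton (Hlow (2 * n - i l - 1)) := hHlow _ (by omega)
    have hrelsub : Subsingleton (Hrel (i l + 1)) :=
      (duality (i l)).symm.toEquiv.symm.subsingleton
    exact hexact (i l) ⟨x l, hx l⟩ (Subsingleton.elim _ _)
  choose w hw hbw using key
  have hmem : (List.ofFn w).prod ∈ 𝒲 ((List.ofFn i).sum) :=
    SetLike.list_prod_ofFn_mem_graded i w hw
  have hbot : 𝒲 ((List.ofFn i).sum) = ⊥ := by
    apply hcohW
    rw [List.sum_ofFn]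
    omega
  have hzero : (List.ofFn w).prod = 0 := by
    rw [hbot] at hmem
    simpa using hmem
  apply hprod
  have : List.ofFn x = List.map b (List.ofFn w) := by
    rw [List.map_ofFn]
    exact congrArg List.ofFn (funext fun l => (hbw l).symm)
  rw [this, ← map_list_prod, hzero, map_zero]
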